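/- Let m ≥ 1, let r ∈ ℂ be a primitive m-th root of unity, and let a ∈ ℂ with a^m ≠ 1 and a ≠ −1. Then ∑_{n=0}^{m−1} 1/((a − r^n)(a − r^{−n})) = m·(a^m+1)/((a−1)(a+1)(a^m−1)). -/

import Mathlib

open Finset

lemma prod_lin (m : ℕ) (hm : 1 ≤ m) (r : ℂ) (hr : IsPrimitiveRoot r m) (a : ℂ) :
    ∏ i ∈ Finset.range m, (a - r ^ i) = a ^ m - 1 := by
  have himg : Finset.image (r ^ ·) (Finset.range m) = Polynomial.nthRootsFinset m (1 : ℂ) := by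
    apply Finset.eq_of_subset_of_card_le
    · intro x hx
      simp only [Finset.mem_image] at hx
      obtain ⟨i, _, rfl⟩ := hx
      exact (Polynomial.mem_nthRootsFinset hm 1).2 (by rw [← pow_mul, mul_comm, pow_mul, hr.pow_eq_one, one_pow])
    · rw [hr.card_nthRootsFinset, Finset.card_image_of_injOn hr.injOn_pow, Finset.card_range]
  have := Polynomial.X_pow_sub_one_eq_prod (R := ℂ) hm hr
  have h2 := congrArg (Polynomial.eval a) this
  simp only [Polynomial.eval_sub, Polynomial.eval_pow, Polynomial.eval_X, Polynomial.eval_one,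
    Polynomial.eval_prod, Polynomial.eval_C] at h2
  rw [h2, ← himg, Finset.prod_image (by exact fun i hi j hj => hr.injOn_pow hi hj)]

lemma sum_inv (m : ℕ) (hm : 1 ≤ m) (r : ℂ) (hr : IsPrimitiveRoot r m) (a : ℂ)
    (ha : a ^ m ≠ 1) :
    ∑ i ∈ Finset.range m, 1 / (a - r ^ i) = m * a ^ (m - 1) / (a ^ m - 1) := by
  have hne : ∀ i ∈ Finset.range m, a - r ^ i ≠ 0 := by
    intro i _
    intro h
    apply ha
    rw [sub_eq_zero] at h
    rw [h, ← pow_mul, mul_comm, pow_mul, hr.pow_eq_one, one_pow]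
  have hprod : ∀ b : ℂ, ∏ i ∈ Finset.range m, (b - r ^ i) = b ^ m - 1 :=
    prod_lin m hm r hr
  -- derivative identity
  classical
  have hderF : Polynomial.derivative (∏ i ∈ Finset.range m,
        (Polynomial.X - Polynomial.C (r ^ i))) =
      ∑ i ∈ Finset.range m, (∏ j ∈ (Finset.range m).erase i,
        (Polynomial.X - Polynomial.C (r ^ j))) *
          Polynomial.derivative (Polynomial.X - Polynomial.C (r ^ i)) := by
    rw [Finset.prod_eq_multiset_prod, Polynomial.derivative_prod,
      Finset.sum_eq_multiset_sum]
    refine congrArg Multiset.sum (Multiset.map_congr rfl fun i hi => ?_)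
    rw [← Finset.erase_val, Finset.prod_eq_multiset_prod]
  have hP : (∏ i ∈ Finset.range m, (Polynomial.X - Polynomial.C (r ^ i)) : Polynomial ℂ) =
      Polynomial.X ^ m - 1 := by
    rw [Polynomial.X_pow_sub_one_eq_prod (R := ℂ) hm hr]
    have himg : Finset.image (r ^ ·) (Finset.range m) = Polynomial.nthRootsFinset m (1 : ℂ) := by
      apply Finset.eq_of_subset_of_card_le
      · intro x hx
        simp only [Finset.mem_image] at hx
        obtain ⟨i, _, rfl⟩ := hx
        exact (Polynomial.mem_nthRootsFinset hm 1).2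
          (by rw [← pow_mul, mul_comm, pow_mul, hr.pow_eq_one, one_pow])
      · rw [hr.card_nthRootsFinset, Finset.card_image_of_injOn hr.injOn_pow,
          Finset.card_range]
    rw [← himg, Finset.prod_image (fun i hi j hj h => hr.injOn_pow hi hj h)]
  have hder := hderF
  rw [hP] at hder
  have hder2 := congrArg (Polynomial.eval a) hder
  simp only [Polynomial.derivative_sub, Polynomial.derivative_X, Polynomial.derivative_C,
    Polynomial.derivative_one, Polynomial.derivative_X_pow, sub_zero, mul_one,
    Polynomial.eval_finset_sum, Polynomial.eval_mul, Polynomial.eval_prod, Polynomial.eval_sub,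
    Polynomial.eval_X, Polynomial.eval_C, Polynomial.eval_one, Polynomial.eval_pow,
    Polynomial.eval_natCast, Polynomial.eval_mul] at hder2
  -- hder2 : m * a^(m-1) = ∑ i in range m, ∏ j in erase i, (a - r^j)
  have key : ∀ i ∈ Finset.range m,
      1 / (a - r ^ i) = (∏ j ∈ (Finset.range m).erase i, (a - r ^ j)) / (a ^ m - 1) := by
    intro i hi
    rw [eq_div_iff (sub_ne_zero.2 ha), ← hprod a, ← Finset.prod_erase_mul _ _ hi, one_div,
      mul_comm (∏ j ∈ (Finset.range m).erase i, (a - r ^ j)), ← mul_assoc,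
      inv_mul_cancel₀ (hne i hi), one_mul]
  rw [Finset.sum_congr rfl key, ← Finset.sum_div, ← hder2]

/-- Partial-fraction style identity for a primitive `m`-th root of unity `r`:
`∑_{n=0}^{m−1} 1/((a − r^n)(a − r^{−n})) = m·(a^m+1)/((a−1)(a+1)(a^m−1))`. -/
theorem stmt4 (m : ℕ) (hm : 1 ≤ m) (r : ℂ) (hr : IsPrimitiveRoot r m)
    (a : ℂ) (ha : a ^ m ≠ 1) (ha' : a ≠ -1) :
    ∑ n ∈ Finset.range m, 1 / ((a - r ^ n) * (a - r ^ (-(n : ℤ)))) =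
      m * (a ^ m + 1) / ((a - 1) * (a + 1) * (a ^ m - 1)) := by
  have hr0 : r ≠ 0 := fun h => by
    apply ha
    have := hr.pow_eq_one
    rw [h, zero_pow (by omega)] at this
    exact absurd this (by norm_num)
  have hrpow : ∀ n : ℕ, r ^ (-(n : ℤ)) = (r ^ n)⁻¹ := by
    intro n
    rw [zpow_neg, zpow_natCast]
  have hrn0 : ∀ n : ℕ, r ^ n ≠ 0 := fun n => pow_ne_zero n hr0
  have hrm : ∀ n : ℕ, (r ^ n) ^ m = 1 := fun n => by
    rw [← pow_mul, mul_comm, pow_mul, hr.pow_eq_one, one_pow]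
  by_cases ha0 : a = 0
  · subst ha0
    have h1 : ∀ n ∈ Finset.range m, 1 / ((0 - r ^ n) * (0 - r ^ (-(n : ℤ)))) = 1 := by
      intro n _
      rw [hrpow, zero_sub, zero_sub, neg_mul_neg, mul_inv_cancel₀ (hrn0 n)]
      norm_num
    rw [Finset.sum_congr rfl h1, Finset.sum_const, Finset.card_range, zero_pow (by omega : m ≠ 0)]
    norm_num
  · have ham : a ^ m - 1 ≠ 0 := sub_ne_zero.2 ha
    have ha1 : a - 1 ≠ 0 := by
      intro h
      apply ha
      rw [sub_eq_zero] at h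
      rw [h, one_pow]
    have ha1' : a + 1 ≠ 0 := fun h => ha' (by linear_combination h)
    have hne : ∀ n : ℕ, a - r ^ n ≠ 0 := by
      intro n h
      apply ha
      rw [sub_eq_zero] at h
      rw [h, hrm]
    have hd : ∀ n : ℕ, a * r ^ n - 1 ≠ 0 := by
      intro n h
      apply ha
      rw [sub_eq_zero] at h
      have h2 : a = (r ^ n)⁻¹ := by
        field_simp
        linear_combination h
      rw [h2, inv_pow, hrm, inv_one]
    have hne' : ∀ n : ℕ, a⁻¹ - r ^ n ≠ 0 := by
      intro n h
      apply hd n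
      rw [sub_eq_zero] at h
      rw [← h]
      field_simp
      ring
    have hinvm : a⁻¹ ^ m ≠ 1 := by
      rw [inv_pow]
      intro h
      apply ha
      have := congrArg Inv.inv h
      simpa using this
    have hsq : a ^ 2 - 1 ≠ 0 := by
      intro h
      have h2 : (a - 1) * (a + 1) = 0 := by linear_combination h
      rcases mul_eq_zero.1 h2 with h' | h'
      exacts [ha1 h', ha1' h']
    -- per-term partial fraction
    have hterm : ∀ n ∈ Finset.range m,
        1 / ((a - r ^ n) * (a - r ^ (-(n : ℤ)))) =
          (a * (1 / (a - r ^ n)) - a⁻¹ * (1 / (a⁻¹ - r ^ n))) / (a ^ 2 - 1) := by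
      intro n _
      rw [hrpow]
      have e1 : a - (r ^ n)⁻¹ = (a * r ^ n - 1) / r ^ n := by
        field_simp
      have e2 : a⁻¹ - r ^ n = -(a * r ^ n - 1) / a := by
        field_simp
        ring
      rw [e1, e2]
      rw [div_eq_div_iff (mul_ne_zero (hne n) (div_ne_zero (hd n) (hrn0 n))) hsq]
      have hd' : 1 - a * r ^ n ≠ 0 := fun h => hd n (by linear_combination -h)
      field_simp [hne n, hd', hrn0 n, hd n]
      ring
    rw [Finset.sum_congr rfl hterm, ← Finset.sum_div, Finset.sum_sub_distrib,
      ← Finset.mul_sum, ← Finset.mul_sum, sum_inv m hm r hr a ha, sum_inv m hm r hr a⁻¹ hinvm]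
    obtain ⟨k, rfl⟩ : ∃ k, m = k + 1 := ⟨m - 1, by omega⟩
    simp only [Nat.add_sub_cancel, inv_pow]
    have hak : a ^ k ≠ 0 := pow_ne_zero k ha0
    have haminv : (a ^ (k + 1))⁻¹ - 1 ≠ 0 := by
      intro h
      apply ha
      rw [sub_eq_zero] at h
      have := congrArg Inv.inv h
      simpa using this
    have hsimp : (↑(k + 1) : ℂ) * (a ^ k)⁻¹ / ((a ^ (k + 1))⁻¹ - 1) =
        -(↑(k + 1) : ℂ) * a / (a ^ (k + 1) - 1) := by
      rw [div_eq_div_iff haminv ham]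
      field_simp
      ring
    rw [hsimp]
    field_simp
    ring
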